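/- For every integer s ≥ 2 there exists a constant C > 0 such that for every complex z with |z| ≤ 1, the local error of the RKG2 stability polynomial against the exponential satisfies |R_s(z) − exp(z)| ≤ C·|z|^3. -/

import Mathlib

/-- The Gegenbauer polynomials with parameter 3/2, evaluated at complex arguments:
`C_0(x) = 1`, `C_1(x) = 3x`, and
`C_j(x) = ((2j+1)/j)·x·C_{j-1}(x) − ((j+1)/j)·C_{j-2}(x)` for `j ≥ 2`. -/
noncomputable def gegenbauerC : ℕ → ℂ → ℂ
  | 0, _ => 1
  | 1, x => 3 * x
  | (j + 2), x =>
      (2 * ((j : ℂ) + 2) + 1) / ((j : ℂ) + 2) * x * gegenbauerC (j + 1) x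
        - (((j : ℂ) + 2) + 1) / ((j : ℂ) + 2) * gegenbauerC j x

/-- The RKG2 coefficient `b_j = 4(j−1)(j+4)/(3j(j+1)(j+2)(j+3))`. -/
noncomputable def rkg2B (j : ℕ) : ℝ :=
  4 * ((j : ℝ) - 1) * ((j : ℝ) + 4) /
    (3 * (j : ℝ) * ((j : ℝ) + 1) * ((j : ℝ) + 2) * ((j : ℝ) + 3))

/-- The RKG2 coefficient `a_j = 1 − ((j+1)(j+2)/2)·b_j`. -/
noncomputable def rkg2A (j : ℕ) : ℝ :=
  1 - ((j : ℝ) + 1) * ((j : ℝ) + 2) / 2 * rkg2B j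

/-- The RKG2 parameter `w_1 = 6/((s+4)(s−1))`. -/
noncomputable def rkg2W (s : ℕ) : ℝ := 6 / (((s : ℝ) + 4) * ((s : ℝ) - 1))

/-- The RKG2 stability polynomial `R_j(z) = a_j + b_j·C_j(1 + w_1·z)`, evaluated at complex
arguments, where `w_1` is built from the stage number `s`. -/
noncomputable def rkg2RC (s j : ℕ) (z : ℂ) : ℂ :=
  (rkg2A j : ℂ) + (rkg2B j : ℂ) * gegenbauerC j (1 + (rkg2W s : ℂ) * z)

noncomputable def Ppoly (w : ℂ) : ℕ → Polynomial ℂ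
  | 0 => 1
  | 1 => Polynomial.C 3 * (1 + Polynomial.C w * Polynomial.X)
  | (j + 2) =>
      Polynomial.C ((2 * ((j : ℂ) + 2) + 1) / ((j : ℂ) + 2)) *
          ((1 + Polynomial.C w * Polynomial.X) * Ppoly w (j + 1))
        - Polynomial.C ((((j : ℂ) + 2) + 1) / ((j : ℂ) + 2)) * Ppoly w j

lemma ppoly_eval (w z : ℂ) : ∀ j, (Ppoly w j).eval z = gegenbauerC j (1 + w * z) := by
  have key : ∀ j, (Ppoly w j).eval z = gegenbauerC j (1 + w * z) ∧
      (Ppoly w (j+1)).eval z = gegenbauerC (j+1) (1 + w * z) := by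
    intro j
    induction j with
    | zero => constructor <;> simp [Ppoly, gegenbauerC]
    | succ n ih =>
      refine ⟨ih.2, ?_⟩
      show (Ppoly w (n+2)).eval z = gegenbauerC (n+2) (1 + w * z)
      simp only [Ppoly, gegenbauerC, Polynomial.eval_sub, Polynomial.eval_mul,
        Polynomial.eval_C, Polynomial.eval_add, Polynomial.eval_one, Polynomial.eval_X,
        ih.1, ih.2]
      ring
  exact fun j => (key j).1

lemma coeff_L_zero (w : ℂ) (P : Polynomial ℂ) :
    ((1 + Polynomial.C w * Polynomial.X) * P).coeff 0 = P.coeff 0 := by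
  simp [Polynomial.mul_coeff_zero]

lemma coeff_L_succ (w : ℂ) (P : Polynomial ℂ) (n : ℕ) :
    ((1 + Polynomial.C w * Polynomial.X) * P).coeff (n+1) = P.coeff (n+1) + w * P.coeff n := by
  have : (1 + Polynomial.C w * Polynomial.X) * P = P + Polynomial.C w * (Polynomial.X * P) := by
    ring
  rw [this]
  simp [Polynomial.coeff_X_mul]

lemma ppoly_coeffs (w : ℂ) : ∀ j : ℕ,
    (Ppoly w j).coeff 0 = ((j:ℂ)+1)*((j:ℂ)+2)/2 ∧
    (Ppoly w j).coeff 1 = w * ((j:ℂ)*((j:ℂ)+1)*((j:ℂ)+2)*((j:ℂ)+3)/8) ∧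
    (Ppoly w j).coeff 2 = w^2 * (((j:ℂ)-1)*(j:ℂ)*((j:ℂ)+1)*((j:ℂ)+2)*((j:ℂ)+3)*((j:ℂ)+4)/96) := by
  have key : ∀ j : ℕ,
      ((Ppoly w j).coeff 0 = ((j:ℂ)+1)*((j:ℂ)+2)/2 ∧
       (Ppoly w j).coeff 1 = w * ((j:ℂ)*((j:ℂ)+1)*((j:ℂ)+2)*((j:ℂ)+3)/8) ∧
       (Ppoly w j).coeff 2 = w^2 * (((j:ℂ)-1)*(j:ℂ)*((j:ℂ)+1)*((j:ℂ)+2)*((j:ℂ)+3)*((j:ℂ)+4)/96)) ∧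
      ((Ppoly w (j+1)).coeff 0 = (((j:ℂ)+1)+1)*(((j:ℂ)+1)+2)/2 ∧
       (Ppoly w (j+1)).coeff 1 = w * (((j:ℂ)+1)*(((j:ℂ)+1)+1)*(((j:ℂ)+1)+2)*(((j:ℂ)+1)+3)/8) ∧
       (Ppoly w (j+1)).coeff 2 = w^2 * ((((j:ℂ)+1)-1)*((j:ℂ)+1)*(((j:ℂ)+1)+1)*(((j:ℂ)+1)+2)*(((j:ℂ)+1)+3)*(((j:ℂ)+1)+4)/96)) := by
    intro j
    induction j with
    | zero =>
      constructor
      · refine ⟨?_, ?_, ?_⟩ <;>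
          simp [Ppoly, Polynomial.coeff_one]
      · refine ⟨?_, ?_, ?_⟩ <;>
          simp [Ppoly, Polynomial.coeff_add, Polynomial.coeff_C_mul, Polynomial.coeff_one,
            Polynomial.coeff_X, Polynomial.coeff_mul_X] <;> ring_nf
    | succ n ih =>
      have h2 : ((n:ℂ) + 2) ≠ 0 := by
        have : ((n+2 : ℕ) : ℂ) ≠ 0 := Nat.cast_ne_zero.mpr (by omega)
        push_cast at this; exact this
      obtain ⟨⟨h00, h01, h02⟩, ⟨h10, h11, h12⟩⟩ := ih
      refine ⟨⟨?_, ?_, ?_⟩, ?_, ?_, ?_⟩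
      · push_cast; exact h10
      · push_cast; exact h11
      · push_cast; exact h12
      · show (Ppoly w (n+2)).coeff 0 = _
        rw [Ppoly]
        simp only [Polynomial.coeff_sub, Polynomial.coeff_C_mul, coeff_L_zero, h00, h10]
        push_cast
        field_simp
        ring
      · show (Ppoly w (n+2)).coeff 1 = _
        rw [Ppoly]
        simp only [Polynomial.coeff_sub, Polynomial.coeff_C_mul]
        rw [coeff_L_succ]
        rw [h10, h11, h01]
        push_cast
        field_simp
        ring
      · show (Ppoly w (n+2)).coeff 2 = _
        rw [Ppoly]
        simp only [Polynomial.coeff_sub, Polynomial.coeff_C_mul]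
        rw [coeff_L_succ]
        rw [h11, h12, h02]
        push_cast
        field_simp
        ring
  exact fun j => (key j).1

/-- For every integer `s ≥ 2` there exists a constant `C > 0` such that for every complex `z`
with `|z| ≤ 1`, the local error of the RKG2 stability polynomial against the exponential
satisfies `|R_s(z) − exp(z)| ≤ C·|z|^3`. -/
theorem rkg2_local_error (s : ℕ) (hs : 2 ≤ s) :
    ∃ C : ℝ, 0 < C ∧ ∀ z : ℂ, ‖z‖ ≤ 1 →
      ‖rkg2RC s s z - Complex.exp z‖ ≤ C * ‖z‖ ^ 3 := by
  have hs2 : (2:ℝ) ≤ (s:ℝ) := by exact_mod_cast hs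
  have hs0 : (s:ℝ) ≠ 0 := by linarith
  have hsm1 : (s:ℝ) - 1 ≠ 0 := by linarith
  have hs1 : (s:ℝ) + 1 ≠ 0 := by linarith
  have hsp2 : (s:ℝ) + 2 ≠ 0 := by linarith
  have hs3 : (s:ℝ) + 3 ≠ 0 := by linarith
  have hs4 : (s:ℝ) + 4 ≠ 0 := by linarith
  have hb1 : rkg2B s * rkg2W s * ((s:ℝ)*((s:ℝ)+1)*((s:ℝ)+2)*((s:ℝ)+3)/8) = 1 := by
    unfold rkg2B rkg2W
    field_simp
    ring
  have hb2 : rkg2B s * (rkg2W s)^2 *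
      (((s:ℝ)-1)*(s:ℝ)*((s:ℝ)+1)*((s:ℝ)+2)*((s:ℝ)+3)*((s:ℝ)+4)/96) = 1/2 := by
    unfold rkg2B rkg2W
    field_simp
    ring
  set w : ℂ := (rkg2W s : ℂ) with hw
  set a : ℂ := (rkg2A s : ℂ) with ha
  set b : ℂ := (rkg2B s : ℂ) with hb
  set Q : Polynomial ℂ := Polynomial.C a + Polynomial.C b * Ppoly w s -
      (Polynomial.C 1 + Polynomial.X + Polynomial.C (1/2 : ℂ) * Polynomial.X ^ 2) with hQ
  obtain ⟨hc0, hc1, hc2⟩ := ppoly_coeffs w s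
  have hT0 : (Polynomial.C (1:ℂ) + Polynomial.X + Polynomial.C (1/2 : ℂ) * Polynomial.X ^ 2).coeff 0 = 1 := by
    simp [Polynomial.coeff_add, Polynomial.coeff_X, Polynomial.coeff_C_mul, Polynomial.coeff_X_pow]
  have hT1 : (Polynomial.C (1:ℂ) + Polynomial.X + Polynomial.C (1/2 : ℂ) * Polynomial.X ^ 2).coeff 1 = 1 := by
    simp [Polynomial.coeff_add, Polynomial.coeff_X, Polynomial.coeff_C_mul, Polynomial.coeff_X_pow,
      Polynomial.coeff_C, Polynomial.coeff_one]
  have hT2 : (Polynomial.C (1:ℂ) + Polynomial.X + Polynomial.C (1/2 : ℂ) * Polynomial.X ^ 2).coeff 2 = 1/2 := by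
    simp [Polynomial.coeff_add, Polynomial.coeff_X, Polynomial.coeff_C_mul, Polynomial.coeff_X_pow,
      Polynomial.coeff_C, Polynomial.coeff_one]
  have hQ0 : Q.coeff 0 = 0 := by
    rw [hQ]
    simp only [Polynomial.coeff_sub, Polynomial.coeff_add, Polynomial.coeff_C_mul,
      Polynomial.coeff_C, hc0, hT0]
    rw [ha, hb]
    unfold rkg2A
    push_cast
    ring
  have hQ1 : Q.coeff 1 = 0 := by
    rw [hQ]
    simp only [Polynomial.coeff_sub, Polynomial.coeff_add, Polynomial.coeff_C_mul,
      Polynomial.coeff_C, hc1, hT1, Nat.one_ne_zero, if_false]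
    have := congrArg (fun r : ℝ => (r : ℂ)) hb1
    push_cast at this
    rw [hb, hw]
    linear_combination this
  have hQ2 : Q.coeff 2 = 0 := by
    rw [hQ]
    simp only [Polynomial.coeff_sub, Polynomial.coeff_add, Polynomial.coeff_C_mul,
      Polynomial.coeff_C, hc2, hT2, Nat.succ_ne_zero, OfNat.ofNat_ne_zero, if_false]
    have := congrArg (fun r : ℝ => (r : ℂ)) hb2
    push_cast at this
    rw [hb, hw]
    linear_combination this
  have hdvd : Polynomial.X ^ 3 ∣ Q := by
    rw [Polynomial.X_pow_dvd_iff]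
    intro d hd
    interval_cases d
    · exact hQ0
    · exact hQ1
    · exact hQ2
  obtain ⟨G, hG⟩ := hdvd
  set M : ℝ := ∑ i ∈ Finset.range (G.natDegree + 1), ‖G.coeff i‖ with hM
  have hM0 : 0 ≤ M := Finset.sum_nonneg fun i _ => norm_nonneg _
  refine ⟨M + 1, by linarith, fun z hz => ?_⟩
  have hGe : ‖G.eval z‖ ≤ M := by
    rw [Polynomial.eval_eq_sum_range]
    refine (norm_sum_le _ _).trans ?_
    rw [hM]
    gcongr with i hi
    rw [norm_mul, norm_pow]
    exact mul_le_of_le_one_right (norm_nonneg _) (pow_le_one₀ (norm_nonneg z) hz)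
  have hQev : Q.eval z = rkg2RC s s z - (1 + z + z^2/2) := by
    rw [hQ]
    simp only [Polynomial.eval_sub, Polynomial.eval_add, Polynomial.eval_mul, Polynomial.eval_C,
      Polynomial.eval_X, Polynomial.eval_pow, ppoly_eval]
    rw [rkg2RC, ← hw, ← ha, ← hb]
    ring
  have hexp : ‖Complex.exp z - (1 + z + z^2/2)‖ ≤ ‖z‖^3 * (4 * 18⁻¹ : ℝ) := by
    have h := Complex.exp_bound (x := z) hz (n := 3) (by norm_num)
    have hsum : ∑ m ∈ Finset.range 3, z ^ m / (m.factorial : ℂ) = 1 + z + z^2/2 := by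
      rw [Finset.sum_range_succ, Finset.sum_range_succ, Finset.sum_range_succ,
        Finset.sum_range_zero]
      norm_num [Nat.factorial]
    rw [hsum] at h
    refine h.trans (le_of_eq ?_)
    norm_num [Nat.factorial]
  have key : rkg2RC s s z - Complex.exp z = Q.eval z - (Complex.exp z - (1 + z + z^2/2)) := by
    rw [hQev]; ring
  rw [key]
  calc ‖Q.eval z - (Complex.exp z - (1 + z + z^2/2))‖
      ≤ ‖Q.eval z‖ + ‖Complex.exp z - (1 + z + z^2/2)‖ := norm_sub_le _ _
    _ ≤ M * ‖z‖^3 + ‖z‖^3 * (4 * 18⁻¹ : ℝ) := by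
        refine add_le_add ?_ hexp
        rw [hG, Polynomial.eval_mul, Polynomial.eval_pow, Polynomial.eval_X, norm_mul, norm_pow]
        rw [mul_comm]
        exact mul_le_mul_of_nonneg_right hGe (pow_nonneg (norm_nonneg _) _)
    _ ≤ (M + 1) * ‖z‖^3 := by nlinarith [pow_nonneg (norm_nonneg z) 3]
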